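/- arXiv:2506.22651 — 5 statements merged into one kernel-verified Lean document; each statement's English description precedes it below -/
import Mathlib

section
/- Let H be an order in a definite rational quaternion algebra A that is a left principal ideal domain, let θ ∈ H be primitive (not divisible by any rational integer other than ±1), and let m be a positive integer dividing the reduced norm N(θ). Then θ has a right divisor γ ∈ H with N(γ) = m, and γ is unique up to left associates (multiplication on the left by a unit of H). -/
open Quaternion

/-- Reduced norm on the definite quaternion algebra `(−a,−b / ℚ)`. -/
def qN (a b : ℚ) (x : ℍ[ℚ, -a, -b]) : ℚ := (x * star x).re

open Polynomial
set_option maxHeartbeats 1000000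
set_option synthInstance.maxHeartbeats 400000

variable {a b : ℚ}

lemma qN_coe (x : ℚ) : qN a b ((x : ℍ[ℚ, -a, -b])) = x * x := by
  simp [qN, QuaternionAlgebra.re_mul]

lemma mul_star_qN (x : ℍ[ℚ, -a, -b]) : x * star x = ((qN a b x : ℚ) : ℍ[ℚ, -a, -b]) :=
  QuaternionAlgebra.mul_star_eq_coe x

lemma star_mul_qN (x : ℍ[ℚ, -a, -b]) : star x * x = ((qN a b x : ℚ) : ℍ[ℚ, -a, -b]) := by
  rw [star_comm_self', mul_star_qN]

lemma qN_mul (x y : ℍ[ℚ, -a, -b]) : qN a b (x * y) = qN a b x * qN a b y := by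
  have : (x * y) * star (x * y) = ((qN a b x * qN a b y : ℚ) : ℍ[ℚ, -a, -b]) := by
    rw [star_mul, show x * y * (star y * star x) = x * (y * star y) * star x by
      rw [mul_assoc, ← mul_assoc y, ← mul_assoc x], mul_star_qN y]
    rw [mul_assoc, (QuaternionAlgebra.coe_commute (qN a b y) (star x)).eq, ← mul_assoc,
      mul_star_qN, ← QuaternionAlgebra.coe_mul]
  have h2 := congrArg QuaternionAlgebra.re this
  simpa [qN] using h2

lemma qN_explicit (x : ℍ[ℚ, -a, -b]) :
    qN a b x = x.re^2 + a * x.imI^2 + b * x.imJ^2 + a * b * x.imK^2 := by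
  simp [qN, QuaternionAlgebra.re_mul]; ring

lemma qN_nonneg (ha : 0 < a) (hb : 0 < b) (x : ℍ[ℚ, -a, -b]) : 0 ≤ qN a b x := by
  rw [qN_explicit]; positivity

lemma qN_eq_zero (ha : 0 < a) (hb : 0 < b) {x : ℍ[ℚ, -a, -b]} :
    qN a b x = 0 ↔ x = 0 := by
  constructor
  · intro h
    rw [qN_explicit] at h
    have t0 : (0:ℚ) ≤ x.re^2 := sq_nonneg _
    have t1 : (0:ℚ) ≤ a * x.imI^2 := by positivity
    have t2 : (0:ℚ) ≤ b * x.imJ^2 := by positivity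
    have t3 : (0:ℚ) ≤ a * b * x.imK^2 := by positivity
    have e0 : x.re^2 = 0 := by linarith
    have e1 : a * x.imI^2 = 0 := by linarith
    have e2 : b * x.imJ^2 = 0 := by linarith
    have e3 : a * b * x.imK^2 = 0 := by linarith
    have r0 : x.re = 0 := pow_eq_zero_iff (n := 2) (by norm_num) |>.mp e0
    have r1 : x.imI = 0 := by
      have h' : x.imI^2 = 0 := by
        rcases mul_eq_zero.mp e1 with h' | h'
        · exact absurd h' (ne_of_gt ha)
        · exact h'
      exact pow_eq_zero_iff (n := 2) (by norm_num) |>.mp h'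
    have r2 : x.imJ = 0 := by
      have h' : x.imJ^2 = 0 := by
        rcases mul_eq_zero.mp e2 with h' | h'
        · exact absurd h' (ne_of_gt hb)
        · exact h'
      exact pow_eq_zero_iff (n := 2) (by norm_num) |>.mp h'
    have r3 : x.imK = 0 := by
      have h' : x.imK^2 = 0 := by
        rcases mul_eq_zero.mp e3 with h' | h'
        · exact absurd h' (ne_of_gt (mul_pos ha hb))
        · exact h'
      exact pow_eq_zero_iff (n := 2) (by norm_num) |>.mp h'
    ext <;> simp [r0, r1, r2, r3]
  · rintro rfl; simp [qN_explicit]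

lemma quat_noZero (ha : 0 < a) (hb : 0 < b) {x y : ℍ[ℚ, -a, -b]}
    (h : x * y = 0) : x = 0 ∨ y = 0 := by
  have h1 : qN a b x * qN a b y = 0 := by
    rw [← qN_mul, h]; simp [qN_explicit]
  rcases mul_eq_zero.mp h1 with h' | h'
  · exact Or.inl ((qN_eq_zero ha hb).mp h')
  · exact Or.inr ((qN_eq_zero ha hb).mp h')
lemma quat_quadratic (x : ℍ[ℚ, -a, -b]) :
    x ^ 2 - ((2 * x.re : ℚ) : ℍ[ℚ, -a, -b]) * x + ((qN a b x : ℚ) : ℍ[ℚ, -a, -b]) = 0 := by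
  have h1 : star x = ((2 * x.re : ℚ) : ℍ[ℚ, -a, -b]) - x := by simpa using QuaternionAlgebra.star_eq_two_re_sub x
  have h2 : x * star x = ((qN a b x : ℚ) : ℍ[ℚ, -a, -b]) := QuaternionAlgebra.mul_star_eq_coe x
  rw [h1, mul_sub] at h2
  rw [QuaternionAlgebra.coe_commutes, pow_two]
  linear_combination (norm := noncomm_ring) -h2

lemma integral_of_mem {H : Subring ℍ[ℚ, -a, -b]} (hfg : H.toAddSubgroup.FG)
    {x : ℍ[ℚ, -a, -b]} (hx : x ∈ H) : IsIntegral ℤ x := by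
  have hfg' : (Subalgebra.toSubmodule (subalgebraOfSubring H)).FG := by
    rw [Submodule.fg_iff_addSubgroup_fg]
    exact hfg
  exact IsIntegral.of_mem_of_fg _ hfg' x hx

lemma coeffs_int (ha : 0 < a) (hb : 0 < b)
    (hdom : ∀ {x y : ℍ[ℚ, -a, -b]}, x * y = 0 → x = 0 ∨ y = 0)
    {H : Subring ℍ[ℚ, -a, -b]} (hfg : H.toAddSubgroup.FG)
    {x : ℍ[ℚ, -a, -b]} (hx : x ∈ H) :
    (∃ z : ℤ, (2 * x.re : ℚ) = z) ∧ (∃ z : ℤ, qN a b x = z) := by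
  have hint : IsIntegral ℤ x := integral_of_mem hfg hx
  letI instK : CommRing (Algebra.adjoin ℚ ({x} : Set ℍ[ℚ, -a, -b])) :=
    Algebra.adjoinCommRingOfComm ℚ (fun u hu v hv => by
      rcases Set.mem_singleton_iff.mp hu with rfl
      rcases Set.mem_singleton_iff.mp hv with rfl
      rfl)
  set f : Algebra.adjoin ℚ ({x} : Set ℍ[ℚ, -a, -b]) →ₐ[ℚ] ℍ[ℚ, -a, -b] :=
    Subalgebra.val _ with hf
  have hfinj : Function.Injective f := Subtype.val_injective
  set x' : Algebra.adjoin ℚ ({x} : Set ℍ[ℚ, -a, -b]) :=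
    ⟨x, Algebra.self_mem_adjoin_singleton ℚ x⟩ with hx'
  have hfx : f x' = x := rfl
  have hint' : IsIntegral ℤ x' := by
    have := (isIntegral_algHom_iff (f.restrictScalars ℤ) hfinj (x := x')).mp
    exact this (by simpa [hfx] using hint)
  haveI : Nontrivial (Algebra.adjoin ℚ ({x} : Set ℍ[ℚ, -a, -b])) := ⟨⟨0, 1, fun h => by
    have := congrArg Subtype.val h
    simp at this⟩⟩
  haveI : NoZeroDivisors (Algebra.adjoin ℚ ({x} : Set ℍ[ℚ, -a, -b])) := ⟨by
    rintro ⟨u, hu⟩ ⟨v, hv⟩ huv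
    have h5 : u * v = 0 := by
      have := congrArg Subtype.val huv
      simpa using this
    rcases hdom h5 with h | h
    · left; exact Subtype.ext h
    · right; exact Subtype.ext h⟩
  haveI : IsDomain (Algebra.adjoin ℚ ({x} : Set ℍ[ℚ, -a, -b])) := NoZeroDivisors.to_isDomain _
  have hmin := minpoly.isIntegrallyClosed_eq_field_fractions' (R := ℤ)
    (S := Algebra.adjoin ℚ ({x} : Set ℍ[ℚ, -a, -b])) ℚ hint'
  have hcoeff : ∀ i, ∃ z : ℤ, (minpoly ℚ x').coeff i = z := fun i =>
    ⟨(minpoly ℤ x').coeff i, by rw [hmin, coeff_map]; simp⟩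
  set P : ℚ[X] := X ^ 2 - C (2 * x.re) * X + C (qN a b x) with hP
  have hPm : P.Monic := by
    rw [hP]; monicity!
  have haev : aeval x' P = 0 := by
    apply hfinj
    have h6 : f (aeval x' P) = aeval (f x') P := by
      rw [← Polynomial.aeval_algHom_apply]
    rw [h6, hfx, map_zero]
    simp only [hP, map_add, map_sub, map_mul, map_pow, aeval_X, aeval_C,
      QuaternionAlgebra.coe_algebraMap, ← QuaternionAlgebra.coe_mul]
    exact quat_quadratic x
  have hdvd : minpoly ℚ x' ∣ P := minpoly.dvd ℚ x' haev
  have hPdeg : P.natDegree = 2 := by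
    rw [hP]; compute_degree!
  have hintQ : IsIntegral ℚ x' := hint'.tower_top
  have hq : (minpoly ℚ x').Monic := minpoly.monic hintQ
  have hdle : (minpoly ℚ x').natDegree ≤ 2 := by
    rw [← hPdeg]
    exact natDegree_le_of_dvd hdvd hPm.ne_zero
  have hdpos : 0 < (minpoly ℚ x').natDegree := minpoly.natDegree_pos hintQ
  interval_cases hdeg : (minpoly ℚ x').natDegree
  · -- degree 1 : x is a scalar
    have hxe : x = algebraMap ℚ _ (- (minpoly ℚ x').coeff 0) := by
      have h0 := minpoly.aeval ℚ x'
      rw [hq.eq_X_add_C hdeg] at h0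
      simp only [map_add, aeval_X, aeval_C] at h0
      have hx0 : x' = - (algebraMap ℚ _ ((minpoly ℚ x').coeff 0)) := by
        linear_combination h0
      have h7 := congrArg f hx0
      rw [hfx] at h7
      conv_lhs => rw [h7]
      simp
    obtain ⟨z, hz⟩ := hcoeff 0
    have hre : x.re = -((minpoly ℚ x').coeff 0) := by
      have h8 := congrArg QuaternionAlgebra.re hxe
      simpa using h8
    have him : qN a b x = ((minpoly ℚ x').coeff 0) * ((minpoly ℚ x').coeff 0) := by
      conv_lhs => rw [hxe]
      show qN a b (((- (minpoly ℚ x').coeff 0 : ℚ)) : ℍ[ℚ, -a, -b]) = _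
      simp [qN, QuaternionAlgebra.re_mul]
    constructor
    · exact ⟨-2 * z, by rw [hre, hz]; push_cast; ring⟩
    · exact ⟨z * z, by rw [him, hz]; push_cast; ring⟩
  · -- degree 2 : minpoly = P
    have hPe : minpoly ℚ x' = P := by
      obtain ⟨c, hc⟩ := hdvd
      have hcm : c.Monic := by
        have h3 : (minpoly ℚ x').leadingCoeff * c.leadingCoeff = 1 := by
          rw [← leadingCoeff_mul, ← hc, hPm.leadingCoeff]
        rwa [hq.leadingCoeff, one_mul] at h3
      have hcd : c.natDegree = 0 := by
        have h4 := congrArg natDegree hc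
        rw [natDegree_mul hq.ne_zero hcm.ne_zero, hPdeg, hdeg] at h4
        omega
      rw [hc, eq_one_of_monic_natDegree_zero hcm hcd, mul_one]
    constructor
    · obtain ⟨z, hz⟩ := hcoeff 1
      refine ⟨-z, ?_⟩
      have hc1 : P.coeff 1 = -(2 * x.re) := by
        simp [hP, coeff_X, coeff_C]
      rw [hPe, hc1] at hz
      push_cast [← hz]; ring
    · obtain ⟨z, hz⟩ := hcoeff 0
      refine ⟨z, ?_⟩
      have hc0 : P.coeff 0 = qN a b x := by
        simp [hP, coeff_X, coeff_C]
      rw [hPe, hc0] at hz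
      exact hz

lemma qN_int (ha : 0 < a) (hb : 0 < b) {H : Subring ℍ[ℚ, -a, -b]} (hfg : H.toAddSubgroup.FG)
    {x : ℍ[ℚ, -a, -b]} (hx : x ∈ H) : ∃ z : ℤ, 0 ≤ z ∧ qN a b x = z := by
  obtain ⟨-, z, hz⟩ := coeffs_int ha hb (fun h => quat_noZero ha hb h) hfg hx
  refine ⟨z, ?_, hz⟩
  have := qN_nonneg ha hb x
  rw [hz] at this
  exact_mod_cast this

lemma star_mem (ha : 0 < a) (hb : 0 < b) {H : Subring ℍ[ℚ, -a, -b]} (hfg : H.toAddSubgroup.FG)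
    {x : ℍ[ℚ, -a, -b]} (hx : x ∈ H) : star x ∈ H := by
  obtain ⟨⟨z, hz⟩, -⟩ := coeffs_int ha hb (fun h => quat_noZero ha hb h) hfg hx
  have h1 : star x = ((z : ℤ) : ℍ[ℚ, -a, -b]) - x := by
    rw [QuaternionAlgebra.star_eq_two_re_sub, zero_mul, add_zero, hz, QuaternionAlgebra.coe_intCast]
  rw [h1]
  exact H.sub_mem (intCast_mem H z) hx

lemma exists_fac (ha : 0 < a) (hb : 0 < b) (H : Subring ℍ[ℚ, -a, -b])
    (hfg : H.toAddSubgroup.FG)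
    (hPID : ∀ I : Set ℍ[ℚ, -a, -b],
      (I ⊆ H ∧ (0 : ℍ[ℚ, -a, -b]) ∈ I ∧ (∀ x ∈ I, ∀ y ∈ I, x + y ∈ I) ∧
        (∀ h ∈ H, ∀ x ∈ I, h * x ∈ I)) →
      ∃ γ ∈ H, I = {x | ∃ h ∈ H, x = h * γ}) :
    ∀ m : ℕ, 0 < m → ∀ θ : ℍ[ℚ, -a, -b], θ ∈ H →
      (∀ n : ℤ, (∃ h ∈ H, θ = (n : ℍ[ℚ, -a, -b]) * h) → n = 1 ∨ n = -1) →
      (∃ t : ℤ, qN a b θ = (m : ℚ) * t) →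
      ∃ γ ∈ H, ∃ ε ∈ H, ∃ μ ∈ H, ∃ lam ∈ H,
        θ = ε * γ ∧ qN a b γ = m ∧ γ = μ * θ + lam * ((m : ℚ) : ℍ[ℚ, -a, -b]) := by
  intro m
  induction m using Nat.strong_induction_on with
  | _ m IH =>
  intro hm θ hθ hprim hdvd
  rcases eq_or_lt_of_le (show 1 ≤ m from hm) with hm1 | hm2
  · -- m = 1
    refine ⟨1, H.one_mem, θ, hθ, 0, H.zero_mem, 1, H.one_mem, by simp, ?_, by
      rw [← hm1]; push_cast; simp⟩
    rw [← hm1]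
    have := qN_coe (a := a) (b := b) 1
    simpa using this
  · -- m ≥ 2
    set p := m.minFac with hp
    have hpprime : p.Prime := Nat.minFac_prime (by omega)
    have hpdvd : p ∣ m := Nat.minFac_dvd m
    obtain ⟨m', hm'⟩ := hpdvd
    have hp2 : 2 ≤ p := hpprime.two_le
    have hm'pos : 0 < m' := by
      rcases Nat.eq_zero_or_pos m' with rfl | h
      · rw [Nat.mul_zero] at hm'; omega
      · exact h
    have hm'lt : m' < m := by
      have h2 : 2 * m' ≤ p * m' := Nat.mul_le_mul_right _ hp2
      omega
    obtain ⟨t, ht⟩ := hdvd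
    -- the left ideal Hθ + Hp
    set I : Set ℍ[ℚ, -a, -b] :=
      {x | ∃ h₁ ∈ H, ∃ h₂ ∈ H, x = h₁ * θ + h₂ * ((p : ℚ) : ℍ[ℚ, -a, -b])} with hI
    have hpm : ((p : ℚ) : ℍ[ℚ, -a, -b]) ∈ H := by
      have : ((p : ℚ) : ℍ[ℚ, -a, -b]) = ((p : ℕ) : ℍ[ℚ, -a, -b]) := by push_cast; rfl
      rw [this]; exact natCast_mem H p
    have hIdeal : I ⊆ ↑H ∧ (0 : ℍ[ℚ, -a, -b]) ∈ I ∧ (∀ x ∈ I, ∀ y ∈ I, x + y ∈ I) ∧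
        (∀ h ∈ H, ∀ x ∈ I, h * x ∈ I) := by
      refine ⟨?_, ?_, ?_, ?_⟩
      · rintro x ⟨h₁, hh₁, h₂, hh₂, rfl⟩
        exact H.add_mem (H.mul_mem hh₁ hθ) (H.mul_mem hh₂ hpm)
      · exact ⟨0, H.zero_mem, 0, H.zero_mem, by simp⟩
      · rintro x ⟨h₁, hh₁, h₂, hh₂, rfl⟩ y ⟨g₁, hg₁, g₂, hg₂, rfl⟩
        exact ⟨h₁ + g₁, H.add_mem hh₁ hg₁, h₂ + g₂, H.add_mem hh₂ hg₂, by noncomm_ring⟩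
      · rintro h hh x ⟨h₁, hh₁, h₂, hh₂, rfl⟩
        exact ⟨h * h₁, H.mul_mem hh hh₁, h * h₂, H.mul_mem hh hh₂, by noncomm_ring⟩
    obtain ⟨γₚ, hγₚH, hIeq⟩ := hPID I hIdeal
    -- θ, p, γₚ in the ideal
    have hθI : θ ∈ I := ⟨1, H.one_mem, 0, H.zero_mem, by simp⟩
    have hpI : ((p : ℚ) : ℍ[ℚ, -a, -b]) ∈ I := ⟨0, H.zero_mem, 1, H.one_mem, by simp⟩
    rw [hIeq] at hθI hpI
    obtain ⟨ε₁, hε₁, hθfac⟩ := hθI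
    obtain ⟨δ, hδ, hpfac⟩ := hpI
    have hγI : γₚ ∈ I := by
      rw [hIeq]; exact ⟨1, H.one_mem, (one_mul _).symm⟩
    obtain ⟨ξ, hξ, ζ, hζ, hγbez⟩ := hγI
    -- norms
    obtain ⟨zγ, hzγ0, hzγ⟩ := qN_int ha hb hfg hγₚH
    obtain ⟨zδ, hzδ0, hzδ⟩ := qN_int ha hb hfg hδ
    have hqp : qN a b ((p : ℚ) : ℍ[ℚ, -a, -b]) = (p : ℚ) * p := qN_coe _
    have hδγ : (zδ * zγ : ℤ) = (p : ℤ) * p := by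
      have := qN_mul δ γₚ
      rw [← hpfac, hqp, hzδ, hzγ] at this
      exact_mod_cast this.symm
    have hzγdvd : zγ.toNat ∣ p ^ 2 := by
      have h1 : (zγ.toNat : ℤ) = zγ := Int.toNat_of_nonneg hzγ0
      refine Int.ofNat_dvd.mp ?_
      rw [h1]
      exact ⟨zδ, by push_cast; linarith [hδγ]⟩
    obtain ⟨i, hi2, hieq⟩ := (Nat.dvd_prime_pow hpprime).mp hzγdvd
    have hzγnat : zγ = (p : ℤ) ^ i := by
      rw [← Int.toNat_of_nonneg hzγ0, hieq]; push_cast; ring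
    interval_cases i
    · -- qN γₚ = 1 : contradiction with primitivity
      exfalso
      have hqγ1 : qN a b γₚ = 1 := by rw [hzγ, hzγnat]; norm_num
      have hunit : star γₚ * γₚ = 1 := by
        rw [star_mul_qN, hqγ1]; norm_num
      -- qN θ = p * (m' * t)
      have hqθ : ((qN a b θ : ℚ) : ℍ[ℚ, -a, -b]) =
          ((p : ℚ) : ℍ[ℚ, -a, -b]) * ((((m' : ℤ) * t : ℤ) : ℚ) : ℍ[ℚ, -a, -b]) := by
        rw [ht, hm', ← QuaternionAlgebra.coe_mul]
        congr 1
        push_cast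
        ring
      have hkey : γₚ * star θ = ((p : ℚ) : ℍ[ℚ, -a, -b]) *
          (ξ * ((((m' : ℤ) * t : ℤ) : ℚ) : ℍ[ℚ, -a, -b]) + ζ * star θ) := by
        calc γₚ * star θ = (ξ * θ + ζ * ((p : ℚ) : ℍ[ℚ, -a, -b])) * star θ := by rw [← hγbez]
          _ = ξ * (θ * star θ) + ζ * (((p : ℚ) : ℍ[ℚ, -a, -b]) * star θ) := by noncomm_ring
          _ = ξ * (((p : ℚ) : ℍ[ℚ, -a, -b]) * ((((m' : ℤ) * t : ℤ) : ℚ) : ℍ[ℚ, -a, -b])) +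
              ζ * (((p : ℚ) : ℍ[ℚ, -a, -b]) * star θ) := by rw [mul_star_qN, hqθ]
          _ = ((p : ℚ) : ℍ[ℚ, -a, -b]) *
              (ξ * ((((m' : ℤ) * t : ℤ) : ℚ) : ℍ[ℚ, -a, -b]) + ζ * star θ) := by
            rw [show ξ * (((p : ℚ) : ℍ[ℚ, -a, -b]) * ((((m' : ℤ) * t : ℤ) : ℚ) : ℍ[ℚ, -a, -b]))
                = ((p : ℚ) : ℍ[ℚ, -a, -b]) * (ξ * ((((m' : ℤ) * t : ℤ) : ℚ) : ℍ[ℚ, -a, -b])) by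
              rw [← mul_assoc, ← (QuaternionAlgebra.coe_commute _ ξ).eq, mul_assoc]]
            rw [show ζ * (((p : ℚ) : ℍ[ℚ, -a, -b]) * star θ)
                = ((p : ℚ) : ℍ[ℚ, -a, -b]) * (ζ * star θ) by
              rw [← mul_assoc, ← (QuaternionAlgebra.coe_commute _ ζ).eq, mul_assoc]]
            rw [mul_add]
      set w : ℍ[ℚ, -a, -b] := star γₚ * (ξ * ((((m' : ℤ) * t : ℤ) : ℚ) : ℍ[ℚ, -a, -b]) + ζ * star θ)
        with hw
      have hstarθ : star θ = ((p : ℚ) : ℍ[ℚ, -a, -b]) * w := by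
        have h3 : star θ = star γₚ * (γₚ * star θ) := by
          rw [← mul_assoc, hunit, one_mul]
        rw [h3, hkey, ← mul_assoc, ← (QuaternionAlgebra.coe_commute ((p:ℚ)) (star γₚ)).eq,
          mul_assoc]
      have hwH : w ∈ H := by
        refine H.mul_mem (star_mem ha hb hfg hγₚH) (H.add_mem (H.mul_mem hξ ?_)
          (H.mul_mem hζ (star_mem ha hb hfg hθ)))
        rw [QuaternionAlgebra.coe_intCast]
        exact intCast_mem H _
      have hθp : θ = ((p : ℤ) : ℍ[ℚ, -a, -b]) * star w := by
        have h9 := congrArg star hstarθ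
        rw [star_star, star_mul, QuaternionAlgebra.star_coe] at h9
        rw [h9, (QuaternionAlgebra.coe_commute ((p:ℚ)) (star w)).symm.eq]
        norm_cast
      rcases hprim p ⟨star w, star_mem ha hb hfg hwH, hθp⟩ with h | h <;> omega
    · -- qN γₚ = p : the good case
      have hqγp : qN a b γₚ = p := by rw [hzγ, hzγnat]; push_cast; ring
      -- norm of ε₁
      have hqε : qN a b ε₁ = (m' : ℚ) * t := by
        have h1 := qN_mul ε₁ γₚ
        rw [← hθfac, hqγp, ht, hm'] at h1
        have hpne : (p : ℚ) ≠ 0 := by positivity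
        apply mul_right_cancel₀ hpne
        push_cast at h1 ⊢
        linarith
      -- ε₁ is primitive
      have hprim' : ∀ n : ℤ, (∃ h ∈ H, ε₁ = (n : ℍ[ℚ, -a, -b]) * h) → n = 1 ∨ n = -1 := by
        rintro n ⟨h, hh, he⟩
        refine hprim n ⟨h * γₚ, H.mul_mem hh hγₚH, ?_⟩
        rw [hθfac, he, mul_assoc]
      obtain ⟨γ', hγ'H, ε', hε'H, μ', hμ'H, lam', hlam'H, hfac', hq', hbez'⟩ :=
        IH m' hm'lt hm'pos ε₁ hε₁ hprim' ⟨t, hqε⟩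
      refine ⟨γ' * γₚ, H.mul_mem hγ'H hγₚH, ε', hε'H,
        μ' + lam' * ((m' : ℚ) : ℍ[ℚ, -a, -b]) * ξ,
        H.add_mem hμ'H (H.mul_mem (H.mul_mem hlam'H (by
          have : ((m' : ℚ) : ℍ[ℚ, -a, -b]) = ((m' : ℕ) : ℍ[ℚ, -a, -b]) := by push_cast; rfl
          rw [this]; exact natCast_mem H m')) hξ),
        lam' * ζ, H.mul_mem hlam'H hζ, ?_, ?_, ?_⟩
      · rw [hθfac, hfac', mul_assoc]
      · rw [qN_mul, hq', hqγp, hm']; push_cast; ring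
      · -- Bezout identity
        have hmm : ((m : ℚ) : ℍ[ℚ, -a, -b]) =
            ((m' : ℚ) : ℍ[ℚ, -a, -b]) * ((p : ℚ) : ℍ[ℚ, -a, -b]) := by
          rw [← QuaternionAlgebra.coe_mul]
          congr 1
          rw [hm']; push_cast; ring
        calc γ' * γₚ = (μ' * ε₁ + lam' * ((m' : ℚ) : ℍ[ℚ, -a, -b])) * γₚ := by rw [← hbez']
          _ = μ' * (ε₁ * γₚ) + lam' * (((m' : ℚ) : ℍ[ℚ, -a, -b]) * γₚ) := by noncomm_ring
          _ = μ' * θ + lam' * (((m' : ℚ) : ℍ[ℚ, -a, -b]) * (ξ * θ + ζ * ((p : ℚ) : ℍ[ℚ, -a, -b]))) := by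
              rw [← hθfac, ← hγbez]
          _ = (μ' + lam' * ((m' : ℚ) : ℍ[ℚ, -a, -b]) * ξ) * θ +
              lam' * ζ * ((m : ℚ) : ℍ[ℚ, -a, -b]) := by
              rw [hmm]
              have hc : ∀ (q : ℚ) (y : ℍ[ℚ, -a, -b]), (q : ℍ[ℚ, -a, -b]) * y = y * q :=
                fun q y => QuaternionAlgebra.coe_commutes q y
              have e2 : ((m' : ℚ) : ℍ[ℚ, -a, -b]) * (ζ * ((p : ℚ) : ℍ[ℚ, -a, -b]))
                  = ζ * (((m' : ℚ) : ℍ[ℚ, -a, -b]) * ((p : ℚ) : ℍ[ℚ, -a, -b])) := by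
                rw [← mul_assoc, hc _ ζ, mul_assoc]
              rw [mul_add ((m' : ℚ) : ℍ[ℚ, -a, -b]), e2]
              noncomm_ring
    · -- qN γₚ = p² : contradiction with primitivity
      exfalso
      have hqγ : qN a b γₚ = (p : ℚ) * p := by rw [hzγ, hzγnat]; push_cast; ring
      have hzδ1 : qN a b δ = 1 := by
        have : (zδ : ℚ) * ((p:ℚ) * p) = (p : ℚ) * p := by
          have h1 := qN_mul δ γₚ
          rw [← hpfac, hqp, hzδ, hqγ] at h1
          exact_mod_cast h1.symm
        have hpne : (p : ℚ) * p ≠ 0 := by positivity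
        have h5 : (zδ : ℚ) * ((p : ℚ) * p) = 1 * ((p : ℚ) * p) := by linarith
        have h6 := mul_right_cancel₀ hpne h5
        rw [hzδ]; exact h6
      have hδunit : star δ * δ = 1 := by rw [star_mul_qN, hzδ1]; norm_num
      have hγeq : γₚ = ((p : ℚ) : ℍ[ℚ, -a, -b]) * star δ := by
        have h4 : γₚ = star δ * (δ * γₚ) := by rw [← mul_assoc, hδunit, one_mul]
        rw [h4, ← hpfac, ← (QuaternionAlgebra.coe_commute ((p:ℚ)) (star δ)).eq]
      have hθp : θ = ((p : ℤ) : ℍ[ℚ, -a, -b]) * (ε₁ * star δ) := by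
        rw [hθfac, hγeq, ← mul_assoc, (QuaternionAlgebra.coe_commute ((p:ℚ)) ε₁).symm.eq,
          mul_assoc]
        norm_cast
      rcases hprim p ⟨ε₁ * star δ, H.mul_mem hε₁ (star_mem ha hb hfg hδ), hθp⟩ with h | h <;> omega


/-- `H` is an order: finitely generated as an additive group, and a full lattice. -/
def IsOrder (a b : ℚ) (H : Subring ℍ[ℚ, -a, -b]) : Prop :=
  H.toAddSubgroup.FG ∧
    ∀ x : ℍ[ℚ, -a, -b], ∃ n : ℕ, 0 < n ∧ (n : ℍ[ℚ, -a, -b]) * x ∈ H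

/-- `H` is a left principal ideal domain: every left ideal is principal. -/
def IsLeftPID (a b : ℚ) (H : Subring ℍ[ℚ, -a, -b]) : Prop :=
  ∀ I : Set ℍ[ℚ, -a, -b],
    (I ⊆ H ∧ (0 : ℍ[ℚ, -a, -b]) ∈ I ∧ (∀ x ∈ I, ∀ y ∈ I, x + y ∈ I) ∧
      (∀ h ∈ H, ∀ x ∈ I, h * x ∈ I)) →
    ∃ γ ∈ H, I = {x | ∃ h ∈ H, x = h * γ}

theorem stmt_0 (a b : ℚ) (ha : 0 < a) (hb : 0 < b)
    (H : Subring ℍ[ℚ, -a, -b]) (hH : IsOrder a b H) (hPID : IsLeftPID a b H)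
    (θ : ℍ[ℚ, -a, -b]) (hθ : θ ∈ H)
    (hprim : ∀ n : ℤ, (∃ h ∈ H, θ = (n : ℍ[ℚ, -a, -b]) * h) → n = 1 ∨ n = -1)
    (m : ℕ) (hm : 0 < m) (hdvd : ∃ t : ℤ, qN a b θ = (m : ℚ) * t) :
    (∃ γ ∈ H, qN a b γ = m ∧ ∃ ε ∈ H, θ = ε * γ) ∧
      ∀ γ₁ ∈ H, ∀ γ₂ ∈ H,
        (qN a b γ₁ = m ∧ ∃ ε ∈ H, θ = ε * γ₁) →
        (qN a b γ₂ = m ∧ ∃ ε ∈ H, θ = ε * γ₂) →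
        ∃ u ∈ H, (∃ v ∈ H, u * v = 1 ∧ v * u = 1) ∧ γ₁ = u * γ₂ := by
  obtain ⟨γ₀, hγ₀H, ε₀, hε₀H, μ, hμH, lam, hlamH, hfac₀, hq₀, hbez₀⟩ :=
    exists_fac ha hb H hH.1 hPID m hm θ hθ hprim hdvd
  refine ⟨⟨γ₀, hγ₀H, hq₀, ε₀, hε₀H, hfac₀⟩, ?_⟩
  rintro γ₁ h1H γ₂ h2H ⟨hN1, ε₁, hε₁H, hfac1⟩ ⟨hN2, ε₂, hε₂H, hfac2⟩
  have hmne : ((m : ℚ)) ≠ 0 := by positivity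
  have key : ∀ γ ε : ℍ[ℚ, -a, -b], γ ∈ H → ε ∈ H → qN a b γ = m → θ = ε * γ →
      ∃ k ∈ H, γ₀ = k * γ ∧ k * star k = 1 ∧ star k * k = 1 := by
    intro γ ε hγ hε hqγ hfac
    have hsm : ((m : ℚ) : ℍ[ℚ, -a, -b]) = star γ * γ := by
      rw [star_mul_qN, hqγ]
    have hkeq : γ₀ = (μ * ε + lam * star γ) * γ := by
      calc γ₀ = μ * θ + lam * ((m : ℚ) : ℍ[ℚ, -a, -b]) := hbez₀
        _ = μ * (ε * γ) + lam * (star γ * γ) := by rw [← hfac, ← hsm]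
        _ = (μ * ε + lam * star γ) * γ := by noncomm_ring
    have hk1 : qN a b (μ * ε + lam * star γ) = 1 := by
      have h1 : qN a b γ₀ = qN a b (μ * ε + lam * star γ) * qN a b γ := by
        rw [hkeq, qN_mul]
      rw [hq₀, hqγ] at h1
      exact mul_right_cancel₀ hmne
        (by linarith : qN a b (μ * ε + lam * star γ) * (m : ℚ) = 1 * (m : ℚ))
    exact ⟨μ * ε + lam * star γ, H.add_mem (H.mul_mem hμH hε)
      (H.mul_mem hlamH (star_mem ha hb hH.1 hγ)), hkeq,
      by rw [mul_star_qN, hk1]; norm_num,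
      by rw [star_mul_qN, hk1]; norm_num⟩
  obtain ⟨k₁, hk₁H, hk₁eq, hk₁u, hk₁u'⟩ := key γ₁ ε₁ h1H hε₁H hN1 hfac1
  obtain ⟨k₂, hk₂H, hk₂eq, hk₂u, hk₂u'⟩ := key γ₂ ε₂ h2H hε₂H hN2 hfac2
  refine ⟨star k₁ * k₂, H.mul_mem (star_mem ha hb hH.1 hk₁H) hk₂H,
    ⟨star k₂ * k₁, H.mul_mem (star_mem ha hb hH.1 hk₂H) hk₁H, ?_, ?_⟩, ?_⟩
  · calc star k₁ * k₂ * (star k₂ * k₁) = star k₁ * (k₂ * star k₂) * k₁ := by noncomm_ring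
      _ = 1 := by rw [hk₂u, mul_one, hk₁u']
  · calc star k₂ * k₁ * (star k₁ * k₂) = star k₂ * (k₁ * star k₁) * k₂ := by noncomm_ring
      _ = 1 := by rw [hk₁u, mul_one, hk₂u']
  · calc γ₁ = (star k₁ * k₁) * γ₁ := by rw [hk₁u', one_mul]
      _ = star k₁ * (k₁ * γ₁) := by rw [mul_assoc]
      _ = star k₁ * (k₂ * γ₂) := by rw [← hk₁eq, hk₂eq]
      _ = star k₁ * k₂ * γ₂ := by rw [mul_assoc]
end

section
/- Let H be an order in a definite rational quaternion algebra A, θ ∈ H, m a positive integer dividing N(θ), and suppose the left ideal Hθ + Hm is principal, generated by γ. If θ is primitive, then N(γ) = m and γ is a right divisor of θ. -/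
open Quaternion

namespace QuatProofAux

open Polynomial

variable {a b : ℚ}

lemma qN_coe (c : ℚ) : qN a b ((c : ℚ) : ℍ[ℚ, -a, -b]) = c ^ 2 := by
  simp [qN, QuaternionAlgebra.re_mul]; ring

lemma qmul_star (x : ℍ[ℚ, -a, -b]) :
    x * star x = ((qN a b x : ℚ) : ℍ[ℚ, -a, -b]) := by
  ext <;> simp [qN, QuaternionAlgebra.re_mul, QuaternionAlgebra.imI_mul,
    QuaternionAlgebra.imJ_mul, QuaternionAlgebra.imK_mul] <;> ring

lemma qstar_mul (x : ℍ[ℚ, -a, -b]) :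
    star x * x = ((qN a b x : ℚ) : ℍ[ℚ, -a, -b]) := by
  ext <;> simp [qN, QuaternionAlgebra.re_mul, QuaternionAlgebra.imI_mul,
    QuaternionAlgebra.imJ_mul, QuaternionAlgebra.imK_mul] <;> ring

lemma aeval_quad (x : ℍ[ℚ, -a, -b]) :
    x ^ 2 + ((-(2 * x.re) : ℚ) : ℍ[ℚ, -a, -b]) * x + ((qN a b x : ℚ) : ℍ[ℚ, -a, -b]) = 0 := by
  ext <;> simp [qN, pow_two, QuaternionAlgebra.re_mul, QuaternionAlgebra.imI_mul,
    QuaternionAlgebra.imJ_mul, QuaternionAlgebra.imK_mul, QuaternionAlgebra.re_ofNat,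
    QuaternionAlgebra.imI_ofNat, QuaternionAlgebra.imJ_ofNat, QuaternionAlgebra.imK_ofNat] <;> ring

lemma qN_pos (ha : 0 < a) (hb : 0 < b) (x : ℍ[ℚ, -a, -b]) (hx : x ≠ 0) : 0 < qN a b x := by
  have h : qN a b x = x.re ^ 2 + a * x.imI ^ 2 + b * x.imJ ^ 2 + a * b * x.imK ^ 2 := by
    simp [qN, QuaternionAlgebra.re_mul]; ring
  rcases (by simpa [QuaternionAlgebra.ext_iff] using hx :
    ¬(x.re = 0 ∧ x.imI = 0 ∧ x.imJ = 0 ∧ x.imK = 0)) with h2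
  rw [h]
  rcases not_and_or.mp h2 with h3 | h4
  · nlinarith [sq_nonneg x.re, sq_nonneg x.imI, sq_nonneg x.imJ, sq_nonneg x.imK,
      sq_pos_of_ne_zero h3, mul_pos ha hb]
  · rcases not_and_or.mp h4 with h3 | h5
    · nlinarith [sq_nonneg x.re, sq_nonneg x.imJ, sq_nonneg x.imK,
        sq_pos_of_ne_zero h3, mul_pos ha hb]
    · rcases not_and_or.mp h5 with h3 | h3 <;>
        nlinarith [sq_nonneg x.re, sq_nonneg x.imI, sq_nonneg x.imJ, sq_nonneg x.imK,
          sq_pos_of_ne_zero h3, mul_pos ha hb]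

lemma mem_int (H : Subring ℍ[ℚ, -a, -b]) (hfg : H.toAddSubgroup.FG)
    (x : ℍ[ℚ, -a, -b]) (hx : x ∈ H) :
    (∃ u : ℤ, (2 * x.re : ℚ) = (u : ℚ)) ∧ (∃ v : ℤ, qN a b x = (v : ℚ)) := by
  have hSfg : Submodule.FG (Subalgebra.toSubmodule (subalgebraOfSubring H)) := by
    rw [Submodule.fg_iff_addSubgroup_fg]; exact hfg
  have hxi : IsIntegral ℤ x := .of_mem_of_fg _ hSfg x hx
  by_cases hsc : ∃ c : ℚ, x = (c : ℍ[ℚ, -a, -b])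
  · obtain ⟨c, rfl⟩ := hsc
    have hci : IsIntegral ℤ c := by
      rw [← isIntegral_algebraMap_iff (A := ℚ) (B := ℍ[ℚ, -a, -b])
        (QuaternionAlgebra.coe_algebraMap (R := ℚ) (c₁ := -a) (c₂ := 0) (c₃ := -b) ▸
          QuaternionAlgebra.coe_injective)]
      rwa [QuaternionAlgebra.coe_algebraMap]
    obtain ⟨k, hk⟩ := IsIntegrallyClosed.isIntegral_iff.mp hci
    refine ⟨⟨2 * k, ?_⟩, ⟨k ^ 2, ?_⟩⟩
    · simp [← hk]
    · rw [qN_coe, ← hk]; simp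
  · obtain ⟨p, hpm, hp⟩ := hxi
    set t : ℚ := 2 * x.re with ht
    set n : ℚ := qN a b x with hn
    set q : ℚ[X] := X ^ 2 + C (-t) * X + C n with hq
    have hqm : q.Monic := by
      rw [hq, add_assoc]
      apply monic_X_pow_add
      apply lt_of_le_of_lt (degree_add_le _ _)
      simp only [max_lt_iff]
      constructor
      · calc degree (C (-t) * X) ≤ 0 + 1 := by
              apply le_trans (degree_mul_le _ _) (add_le_add degree_C_le degree_X_le)
            _ < 2 := by norm_num
      · exact lt_of_le_of_lt degree_C_le (by norm_num)
    have haq : aeval x q = 0 := by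
      rw [hq]
      simp only [map_add, map_mul, map_pow, aeval_X, aeval_C]
      rw [QuaternionAlgebra.coe_algebraMap (R := ℚ)]
      exact aeval_quad x
    set pm : ℚ[X] := p.map (algebraMap ℤ ℚ) with hpm'
    have hapm : aeval x pm = 0 := by
      rw [hpm', aeval_map_algebraMap]
      exact hp
    set r : ℚ[X] := pm %ₘ q with hr
    have hdeg : r.degree ≤ 1 := by
      have h2 := degree_modByMonic_lt pm hqm
      have hdq : q.degree = 2 := by rw [hq]; compute_degree!
      rw [← hr] at h2; rw [hdq] at h2
      exact Order.le_of_lt_succ (by exact_mod_cast h2)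
    have har : aeval x r = 0 := by
      have := modByMonic_add_div pm q
      have : r = pm - q * (pm /ₘ q) := eq_sub_of_add_eq this
      rw [this, map_sub, map_mul, hapm, haq, zero_mul, sub_zero]
    have hr0 : r = 0 := by
      have hrx := eq_X_add_C_of_degree_le_one hdeg
      rw [hrx] at har
      simp only [map_add, map_mul, aeval_X, aeval_C] at har
      rw [QuaternionAlgebra.coe_algebraMap (R := ℚ)] at har
      by_cases h1 : r.coeff 1 = 0
      · rw [h1] at har
        simp only [QuaternionAlgebra.coe_zero, zero_mul, zero_add] at har
        have h0 : r.coeff 0 = 0 := by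
          have := QuaternionAlgebra.coe_injective (c₁ := -a) (c₂ := 0) (c₃ := -b)
            (har.trans (QuaternionAlgebra.coe_zero).symm)
          exact this
        rw [hrx, h1, h0]; simp
      · exfalso
        apply hsc
        refine ⟨(r.coeff 1)⁻¹ * (-(r.coeff 0)), ?_⟩
        have hx1 : (r.coeff 1) • x = -(((r.coeff 0) : ℚ) : ℍ[ℚ, -a, -b]) := by
          rw [← QuaternionAlgebra.coe_mul_eq_smul]
          exact eq_neg_of_add_eq_zero_left har
        have : x = (r.coeff 1)⁻¹ • ((r.coeff 1) • x) := by
          rw [smul_smul, inv_mul_cancel₀ h1, one_smul]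
        rw [this, hx1, smul_neg, QuaternionAlgebra.smul_coe, ← QuaternionAlgebra.coe_neg]
        norm_num
    have hqdvd : q ∣ pm := (Polynomial.modByMonic_eq_zero_iff_dvd hqm).mp (hr ▸ hr0)
    obtain ⟨g', hg'⟩ := IsIntegrallyClosed.eq_map_mul_C_of_dvd (R := ℤ) ℚ hpm hqdvd
    rw [hqm.leadingCoeff, map_one, mul_one] at hg'
    have hc1 : (g'.coeff 1 : ℚ) = -t := by
      have := congrArg (fun s => Polynomial.coeff s 1) hg'
      simp only [Polynomial.coeff_map, hq] at this
      simpa [Polynomial.coeff_add, Polynomial.coeff_X_pow, Polynomial.coeff_C_mul,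
        Polynomial.coeff_X, Polynomial.coeff_C] using this
    have hc0 : (g'.coeff 0 : ℚ) = n := by
      have := congrArg (fun s => Polynomial.coeff s 0) hg'
      simp only [Polynomial.coeff_map, hq] at this
      simpa [Polynomial.coeff_add, Polynomial.coeff_X_pow, Polynomial.coeff_C_mul,
        Polynomial.coeff_X, Polynomial.coeff_C] using this
    exact ⟨⟨-(g'.coeff 1), by show t = _; push_cast; rw [hc1]; ring⟩,
      ⟨g'.coeff 0, by show n = _; rw [hc0]⟩⟩

lemma star_mem (H : Subring ℍ[ℚ, -a, -b]) (hfg : H.toAddSubgroup.FG)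
    (x : ℍ[ℚ, -a, -b]) (hx : x ∈ H) : star x ∈ H := by
  obtain ⟨⟨u, hu⟩, -⟩ := mem_int H hfg x hx
  have hst : star x = ((u : ℤ) : ℍ[ℚ, -a, -b]) - x := by
    have hre : ((u : ℤ) : ℚ) = 2 * x.re := hu.symm
    ext <;> simp [hre] <;> ring
  rw [hst]
  exact sub_mem (intCast_mem H u) hx

lemma cancel_coe {c : ℚ} (hc : c ≠ 0) {z w : ℍ[ℚ, -a, -b]}
    (h : (c : ℍ[ℚ, -a, -b]) * z = (c : ℍ[ℚ, -a, -b]) * w) : z = w := by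
  have h2 := congrArg (fun y => (c⁻¹ : ℚ) • y) h
  simpa [QuaternionAlgebra.coe_mul_eq_smul, smul_smul, inv_mul_cancel₀ hc] using h2

end QuatProofAux

open QuatProofAux

theorem stmt_1 (a b : ℚ) (ha : 0 < a) (hb : 0 < b)
    (H : Subring ℍ[ℚ, -a, -b]) (hH : IsOrder a b H)
    (θ : ℍ[ℚ, -a, -b]) (hθ : θ ∈ H)
    (m : ℕ) (hm : 0 < m) (hdvd : ∃ t : ℤ, qN a b θ = (m : ℚ) * t)
    (γ : ℍ[ℚ, -a, -b]) (hγ : γ ∈ H)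
    (hgen : {x | ∃ α ∈ H, ∃ β ∈ H, x = α * θ + β * (m : ℍ[ℚ, -a, -b])} =
      {x | ∃ h ∈ H, x = h * γ})
    (hprim : ∀ n : ℤ, (∃ h ∈ H, θ = (n : ℍ[ℚ, -a, -b]) * h) → n = 1 ∨ n = -1) :
    qN a b γ = m ∧ ∃ ε ∈ H, θ = ε * γ := by
  obtain ⟨hfg, -⟩ := hH
  obtain ⟨t, htθ⟩ := hdvd
  -- θ = ε * γ
  have h1 : θ ∈ {x | ∃ h ∈ H, x = h * γ} := by
    rw [← hgen]; exact ⟨1, H.one_mem, 0, H.zero_mem, by simp⟩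
  obtain ⟨ε, hε, hθε⟩ := h1
  -- m = δ * γ
  have h2 : (m : ℍ[ℚ, -a, -b]) ∈ {x | ∃ h ∈ H, x = h * γ} := by
    rw [← hgen]; exact ⟨0, H.zero_mem, 1, H.one_mem, by simp⟩
  obtain ⟨δ, hδ, hmδ⟩ := h2
  -- θ ≠ 0, γ ≠ 0
  have hθ0 : θ ≠ 0 := by
    intro h0
    rcases hprim 2 ⟨0, H.zero_mem, by simp [h0]⟩ with h | h <;> norm_num at h
  have hγ0 : γ ≠ 0 := by
    intro h0; exact hθ0 (by rw [hθε, h0, mul_zero])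
  -- qN γ is a positive integer k
  obtain ⟨k, hk⟩ := (mem_int H hfg γ hγ).2
  have hkpos : (0 : ℤ) < k := by
    have := qN_pos ha hb γ hγ0
    rw [hk] at this; exact_mod_cast this
  -- qN γ = x θ + y m
  have h4 : ((qN a b γ : ℚ) : ℍ[ℚ, -a, -b]) ∈
      {x | ∃ α ∈ H, ∃ β ∈ H, x = α * θ + β * (m : ℍ[ℚ, -a, -b])} := by
    rw [hgen]
    exact ⟨star γ, star_mem H hfg γ hγ, (qstar_mul γ).symm⟩
  obtain ⟨x, hx, y, hy, hNeq⟩ := h4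
  -- key identity : (k : ℍ) * θ = m * w' with w' ∈ H
  have hθstar : θ * star θ = (m : ℍ[ℚ, -a, -b]) * ((t : ℤ) : ℍ[ℚ, -a, -b]) := by
    rw [qmul_star θ, htθ]
    push_cast
    rfl
  set w : ℍ[ℚ, -a, -b] := x * ((t : ℤ) : ℍ[ℚ, -a, -b]) + y * star θ with hw
  have hwH : w ∈ H := add_mem (mul_mem hx (intCast_mem H t))
    (mul_mem hy (star_mem H hfg θ hθ))
  have e5 : ((k : ℤ) : ℍ[ℚ, -a, -b]) * star θ = (m : ℍ[ℚ, -a, -b]) * w := by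
    have hcast : ((k : ℤ) : ℍ[ℚ, -a, -b]) = ((qN a b γ : ℚ) : ℍ[ℚ, -a, -b]) := by
      rw [hk]; norm_cast
    rw [hcast, hNeq, hw]
    rw [add_mul, mul_assoc, mul_assoc, hθstar]
    rw [mul_add]
    congr 1
    · rw [← mul_assoc, ← mul_assoc, (Nat.cast_commute m x).eq]
    · rw [← mul_assoc, ← mul_assoc, (Nat.cast_commute m y).eq]
  -- conjugate : (k : ℍ) * θ = m * star w
  have e6 : ((k : ℤ) : ℍ[ℚ, -a, -b]) * θ = (m : ℍ[ℚ, -a, -b]) * star w := by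
    have := congrArg star e5
    rw [star_mul, star_mul, star_star, star_intCast, star_natCast] at this
    rw [(Int.cast_commute k θ).eq, this]
    exact ((Nat.cast_commute m (star w)).symm).eq
  -- Bezout : m ∣ k
  set d : ℕ := Int.gcd k m with hd
  have hdpos : 0 < d := by
    rw [hd]
    exact Int.gcd_pos_of_ne_zero_left _ (by exact_mod_cast hkpos.ne')
  set u : ℤ := Int.gcdA k m with hu
  set v : ℤ := Int.gcdB k m with hv
  have hbez : (d : ℤ) = k * u + (m : ℤ) * v := Int.gcd_eq_gcd_ab k m
  set h₀ : ℍ[ℚ, -a, -b] := (u : ℤ) * star w + (v : ℤ) * θ with hh₀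
  have hh₀H : h₀ ∈ H := add_mem (mul_mem (intCast_mem H u) (star_mem H hfg w hwH))
    (mul_mem (intCast_mem H v) hθ)
  have e7 : ((d : ℤ) : ℍ[ℚ, -a, -b]) * θ = (m : ℍ[ℚ, -a, -b]) * h₀ := by
    have hcast : ((d : ℤ) : ℍ[ℚ, -a, -b]) = ((k * u + (m : ℤ) * v : ℤ) : ℍ[ℚ, -a, -b]) := by
      exact_mod_cast congrArg (fun z : ℤ => (z : ℍ[ℚ, -a, -b])) hbez
    rw [hcast]
    push_cast
    rw [add_mul, hh₀, mul_add]
    congr 1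
    · calc ((k : ℤ) : ℍ[ℚ, -a, -b]) * ((u : ℤ) : ℍ[ℚ, -a, -b]) * θ
          = ((u : ℤ) : ℍ[ℚ, -a, -b]) * (((k : ℤ) : ℍ[ℚ, -a, -b]) * θ) := by
            rw [(Int.cast_commute k ((u : ℤ) : ℍ[ℚ, -a, -b])).eq, mul_assoc]
        _ = ((u : ℤ) : ℍ[ℚ, -a, -b]) * ((m : ℍ[ℚ, -a, -b]) * star w) := by rw [e6]
        _ = (m : ℍ[ℚ, -a, -b]) * (((u : ℤ) : ℍ[ℚ, -a, -b]) * star w) :=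
            ((Nat.cast_commute m (((u : ℤ) : ℍ[ℚ, -a, -b]))).symm.left_comm _)
    · rw [mul_assoc]
  set e : ℤ := (m : ℤ) / d with he
  have hme : (m : ℤ) = (d : ℤ) * e := (Int.mul_ediv_cancel' (Int.gcd_dvd_right k m)).symm
  have e8 : θ = ((e : ℤ) : ℍ[ℚ, -a, -b]) * h₀ := by
    apply cancel_coe (c := ((d : ℤ) : ℚ)) (by exact_mod_cast hdpos.ne')
    rw [QuaternionAlgebra.coe_intCast]
    calc ((d : ℤ) : ℍ[ℚ, -a, -b]) * θ = (m : ℍ[ℚ, -a, -b]) * h₀ := e7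
      _ = (((d : ℤ) * e : ℤ) : ℍ[ℚ, -a, -b]) * h₀ := by rw [← hme]; norm_cast
      _ = ((d : ℤ) : ℍ[ℚ, -a, -b]) * (((e : ℤ) : ℍ[ℚ, -a, -b]) * h₀) := by
          push_cast; rw [mul_assoc]
  have hepos : 0 < e := by
    rcases lt_trichotomy e 0 with h | h | h
    · nlinarith [hme, (show (0:ℤ) < (m:ℤ) by exact_mod_cast hm), (show (0:ℤ) < (d:ℤ) by exact_mod_cast hdpos)]
    · rw [h, mul_zero] at hme; exact absurd hme (by exact_mod_cast hm.ne')
    · exact h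
  have he1 : e = 1 := by
    rcases hprim e ⟨h₀, hh₀H, e8⟩ with h | h
    · exact h
    · omega
  have hmd : (m : ℤ) = (d : ℤ) := by rw [hme, he1, mul_one]
  have hmk : (m : ℤ) ∣ k := hmd ▸ Int.gcd_dvd_left k m
  set s : ℤ := k / (m : ℤ) with hs
  have hks : k = (m : ℤ) * s := (Int.mul_ediv_cancel' hmk).symm
  have hspos : 0 < s := by
    rcases lt_trichotomy s 0 with h | h | h
    · nlinarith [hks, hkpos, (show (0:ℤ) < (m:ℤ) by exact_mod_cast hm)]
    · rw [h, mul_zero] at hks; omega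
    · exact h
  -- star γ = s * δ
  have e9 : (m : ℍ[ℚ, -a, -b]) * star γ = (m : ℍ[ℚ, -a, -b]) * (((s : ℤ) : ℍ[ℚ, -a, -b]) * δ) := by
    calc (m : ℍ[ℚ, -a, -b]) * star γ = δ * γ * star γ := by rw [← hmδ]
      _ = δ * ((qN a b γ : ℚ) : ℍ[ℚ, -a, -b]) := by rw [mul_assoc, qmul_star]
      _ = δ * ((k : ℤ) : ℍ[ℚ, -a, -b]) := by
          rw [hk]; norm_cast
      _ = ((k : ℤ) : ℍ[ℚ, -a, -b]) * δ := ((Int.cast_commute k δ).eq).symm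
      _ = (m : ℍ[ℚ, -a, -b]) * (((s : ℤ) : ℍ[ℚ, -a, -b]) * δ) := by
          rw [hks]; push_cast; rw [mul_assoc]
  have e10 : star γ = ((s : ℤ) : ℍ[ℚ, -a, -b]) * δ := by
    apply cancel_coe (c := ((m : ℕ) : ℚ)) (by exact_mod_cast hm.ne')
    rw [QuaternionAlgebra.coe_natCast]
    exact e9
  have e11 : γ = ((s : ℤ) : ℍ[ℚ, -a, -b]) * star δ := by
    have := congrArg star e10
    rw [star_star, star_mul, star_intCast] at this
    rw [this, (Int.cast_commute s (star δ)).eq]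
  have e12 : θ = ((s : ℤ) : ℍ[ℚ, -a, -b]) * (ε * star δ) := by
    rw [hθε, e11]
    exact (Int.cast_commute s ε).symm.left_comm _
  have hs1 : s = 1 := by
    rcases hprim s ⟨ε * star δ, mul_mem hε (star_mem H hfg δ hδ), e12⟩ with h | h
    · exact h
    · omega
  have hkm : k = (m : ℤ) := by rw [hks, hs1, mul_one]
  refine ⟨?_, ε, hε, hθε⟩
  rw [hk, hkm]
  norm_cast
end

section
/- If an order H in a definite rational quaternion division algebra A satisfies the Dedekind–Hasse condition (for all ρ ∈ A \ H there exist α, β ∈ H with 0 < N(αρ − β) < 1), then H is a maximal order in A. -/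
open Quaternion

open Polynomial in
/-- Applying the quaternion conjugation to a polynomial evaluation with integer
coefficients conjugates the argument. -/
lemma star_aeval_qa {a b : ℚ} (g : Polynomial ℤ) (y : ℍ[ℚ,-a,-b]) :
    star (aeval y g) = aeval (star y) g := by
  induction g using Polynomial.induction_on' with
  | add p q hp hq => simp [hp, hq]
  | monomial n c =>
      simp only [aeval_monomial, star_mul, star_pow]
      have h : star ((algebraMap ℤ ℍ[ℚ,-a,-b]) c) = (algebraMap ℤ ℍ[ℚ,-a,-b]) c := by
        simp [map_intCast]
      rw [h]
      exact ((Int.cast_commute c _).symm.eq)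

/-- The conjugate of an algebraic integer quaternion is an algebraic integer. -/
lemma isIntegral_star_qa {a b : ℚ} {x : ℍ[ℚ,-a,-b]} (hx : IsIntegral ℤ x) :
    IsIntegral ℤ (star x) := by
  obtain ⟨f, hmon, hev⟩ := hx
  refine ⟨f, hmon, ?_⟩
  show Polynomial.aeval (star x) f = 0
  rw [← star_aeval_qa, show Polynomial.aeval x f = 0 from hev, star_zero]

/-- The reduced norm of any element of an order is a rational integer. -/
lemma qN_int_s4 {a b : ℚ} {L : Subring ℍ[ℚ,-a,-b]} (hL : IsOrder a b L) {x : ℍ[ℚ,-a,-b]}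
    (hx : x ∈ L) : ∃ n : ℤ, qN a b x = n := by
  have hfg : (Subalgebra.toSubmodule (subalgebraOfSubring L)).FG := by
    rw [Submodule.fg_iff_addSubgroup_fg]
    exact hL.1
  have hxint : IsIntegral ℤ x := IsIntegral.of_mem_of_fg _ hfg x hx
  have hsx : IsIntegral ℤ (star x) := isIntegral_star_qa hxint
  set S := Algebra.adjoin ℚ ({x} : Set ℍ[ℚ,-a,-b]) with hS
  letI : CommRing S := Algebra.adjoinCommRingOfComm ℚ (by
    rintro p rfl q rfl; rfl)
  have hxS : x ∈ S := Algebra.self_mem_adjoin_singleton ℚ x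
  have hsxS : star x ∈ S := by
    have h1 : star x = ((2 * x.re : ℚ) : ℍ[ℚ,-a,-b]) - x := by
      have h0 := QuaternionAlgebra.self_add_star' x
      simp only [zero_mul, add_zero] at h0
      rw [← h0]; abel
    rw [h1]
    exact S.sub_mem (by rw [← QuaternionAlgebra.coe_algebraMap]; exact S.algebraMap_mem _) hxS
  have hXint : IsIntegral ℤ (⟨x, hxS⟩ : S) :=
    (isIntegral_algHom_iff (S.val.restrictScalars ℤ) Subtype.val_injective).mp hxint
  have hYint : IsIntegral ℤ (⟨star x, hsxS⟩ : S) :=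
    (isIntegral_algHom_iff (S.val.restrictScalars ℤ) Subtype.val_injective).mp hsx
  have hprod : IsIntegral ℤ ((⟨x, hxS⟩ : S) * ⟨star x, hsxS⟩) := hXint.mul hYint
  have hmul : IsIntegral ℤ (x * star x) :=
    (isIntegral_algHom_iff (S.val.restrictScalars ℤ) Subtype.val_injective).mpr hprod
  have hcoe : x * star x = ((qN a b x : ℚ) : ℍ[ℚ,-a,-b]) :=
    QuaternionAlgebra.mul_star_eq_coe x
  rw [hcoe, ← QuaternionAlgebra.coe_algebraMap] at hmul
  have hint : IsIntegral ℤ (qN a b x) := by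
    rwa [isIntegral_algebraMap_iff (by
      rw [QuaternionAlgebra.coe_algebraMap]; exact QuaternionAlgebra.coe_injective)] at hmul
  obtain ⟨n, hn⟩ := IsIntegrallyClosed.isIntegral_iff.mp hint
  exact ⟨n, hn.symm⟩

theorem stmt_4 (a b : ℚ) (ha : 0 < a) (hb : 0 < b)
    (H : Subring ℍ[ℚ, -a, -b]) (hH : IsOrder a b H)
    (hDH : ∀ ρ : ℍ[ℚ, -a, -b], ρ ∉ H →
      ∃ α ∈ H, ∃ β ∈ H, 0 < qN a b (α * ρ - β) ∧ qN a b (α * ρ - β) < 1) :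
    ∀ L : Subring ℍ[ℚ, -a, -b], IsOrder a b L → H ≤ L → H = L := by
  intro L hL hHL
  refine le_antisymm hHL fun ρ hρ => ?_
  by_contra hρH
  obtain ⟨α, hα, β, hβ, h0, h1⟩ := hDH ρ hρH
  have hmem : α * ρ - β ∈ L := L.sub_mem (L.mul_mem (hHL hα) hρ) (hHL hβ)
  obtain ⟨n, hn⟩ := qN_int_s4 hL hmem
  rw [hn] at h0 h1
  have h2 : (1 : ℤ) ≤ n := by exact_mod_cast h0
  have h3 : (1 : ℚ) ≤ (n : ℚ) := by exact_mod_cast h2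
  linarith
end

section
/- Let H = ℤ[1, v₁, v₂, v₃] be an order in A = (−a,−b/ℚ), a,b > 0, write vᵣ = a_{r,0} + a_{r,1}i + a_{r,2}j + a_{r,3}k, let M = max_{1≤r≤3, 0≤s≤3} |a_{r,s}|, d = (1+a)(1+b), and Q = ⌈2M(1+√(1+3d))⌉. If δ = d₀ + d₁v₁ + d₂v₂ + d₃v₃ with |d₀| ≤ p/2 and |dᵢ| < p/Q for i = 1,2,3, then N(δ/p) < 1. -/
open Quaternion

lemma max12 (a0 a1 a2 a3 b0 b1 b2 b3 c0 c1 c2 c3 M : ℚ)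
    (hM : M = max (max (max (max a0 a1) (max a2 a3)) (max (max b0 b1) (max b2 b3)))
          (max (max c0 c1) (max c2 c3))) :
    (a0 ≤ M ∧ a1 ≤ M ∧ a2 ≤ M ∧ a3 ≤ M) ∧ (b0 ≤ M ∧ b1 ≤ M ∧ b2 ≤ M ∧ b3 ≤ M) ∧
    (c0 ≤ M ∧ c1 ≤ M ∧ c2 ≤ M ∧ c3 ≤ M) := by
  subst hM
  refine ⟨⟨?_,?_,?_,?_⟩,⟨?_,?_,?_,?_⟩,⟨?_,?_,?_,?_⟩⟩
  · exact le_max_of_le_left (le_max_of_le_left (le_max_of_le_left (le_max_left _ _)))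
  · exact le_max_of_le_left (le_max_of_le_left (le_max_of_le_left (le_max_right _ _)))
  · exact le_max_of_le_left (le_max_of_le_left (le_max_of_le_right (le_max_left _ _)))
  · exact le_max_of_le_left (le_max_of_le_left (le_max_of_le_right (le_max_right _ _)))
  · exact le_max_of_le_left (le_max_of_le_right (le_max_of_le_left (le_max_left _ _)))
  · exact le_max_of_le_left (le_max_of_le_right (le_max_of_le_left (le_max_right _ _)))
  · exact le_max_of_le_left (le_max_of_le_right (le_max_of_le_right (le_max_left _ _)))
  · exact le_max_of_le_left (le_max_of_le_right (le_max_of_le_right (le_max_right _ _)))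
  · exact le_max_of_le_right (le_max_of_le_left (le_max_left _ _))
  · exact le_max_of_le_right (le_max_of_le_left (le_max_right _ _))
  · exact le_max_of_le_right (le_max_of_le_right (le_max_left _ _))
  · exact le_max_of_le_right (le_max_of_le_right (le_max_right _ _))

lemma aux_real (M d s Q : ℝ) (hM : 0 < M) (hd : 0 ≤ d) (hs : s = Real.sqrt (1+3*d))
    (hQ : 2*M*(1+s) ≤ Q) : 1/4 + 3*(M/Q) + 9*d*(M/Q)^2 ≤ 1 := by
  have hs1 : 1 ≤ s := by
    rw [hs]
    nlinarith [Real.sq_sqrt (by linarith : (0:ℝ) ≤ 1+3*d), Real.sqrt_nonneg (1+3*d)]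
  have hssq : s^2 = 1 + 3*d := by
    rw [hs]; exact Real.sq_sqrt (by linarith)
  have hQ0 : 0 < Q := lt_of_lt_of_le (by nlinarith) hQ
  set u := M/Q with hu
  have hu0 : 0 < u := div_pos hM hQ0
  have huu : 2*u*(1+s) ≤ 1 := by
    rw [hu, show 2*(M/Q)*(1+s) = 2*M*(1+s)/Q by ring, div_le_one hQ0]
    exact hQ
  nlinarith [sq_nonneg (1 - 2*u*(1+s)), mul_nonneg hu0.le (sub_nonneg.mpr hs1),
    mul_nonneg (mul_nonneg hu0.le hu0.le) (sub_nonneg.mpr hs1)]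

lemma aux_comp (p Qq M E e c₁ c₂ c₃ d₁ d₂ d₃ : ℚ) (hp : 0 < p) (hM : 0 < M)
    (he : |e| ≤ E)
    (h₁ : |d₁| < p/Qq) (h₂ : |d₂| < p/Qq) (h₃ : |d₃| < p/Qq)
    (hc₁ : |c₁| ≤ M) (hc₂ : |c₂| ≤ M) (hc₃ : |c₃| ≤ M) :
    |p⁻¹ * (e + d₁*c₁ + d₂*c₂ + d₃*c₃)| < p⁻¹ * (E + 3*(p/Qq)*M) := by
  have tri : |e + d₁*c₁ + d₂*c₂ + d₃*c₃| ≤ |e| + |d₁| * |c₁| + |d₂| * |c₂| + |d₃| * |c₃| := by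
    calc |e + d₁*c₁ + d₂*c₂ + d₃*c₃| ≤ |e + d₁*c₁ + d₂*c₂| + |d₃*c₃| := abs_add_le _ _
      _ ≤ |e + d₁*c₁| + |d₂*c₂| + |d₃*c₃| := by gcongr; exact abs_add_le _ _
      _ ≤ |e| + |d₁*c₁| + |d₂*c₂| + |d₃*c₃| := by gcongr; exact abs_add_le _ _
      _ = |e| + |d₁| * |c₁| + |d₂| * |c₂| + |d₃| * |c₃| := by rw [abs_mul, abs_mul, abs_mul]
  have b1 : |d₁| * |c₁| < (p/Qq)*M :=
    lt_of_le_of_lt (by gcongr) (mul_lt_mul_of_pos_right h₁ hM)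
  have b2 : |d₂| * |c₂| < (p/Qq)*M :=
    lt_of_le_of_lt (by gcongr) (mul_lt_mul_of_pos_right h₂ hM)
  have b3 : |d₃| * |c₃| < (p/Qq)*M :=
    lt_of_le_of_lt (by gcongr) (mul_lt_mul_of_pos_right h₃ hM)
  rw [abs_mul, abs_inv, abs_of_pos hp]
  have hlt : |e + d₁*c₁ + d₂*c₂ + d₃*c₃| < E + 3*(p/Qq)*M := by linarith
  exact mul_lt_mul_of_pos_left hlt (inv_pos.mpr hp)

lemma aux_quad (a b d x0 x1 x2 x3 u : ℚ) (ha : 0 < a) (hb : 0 < b) (hd : d = (1+a)*(1+b))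
    (h0 : |x0| < 1/2 + 3*u) (h1 : |x1| < 3*u) (h2 : |x2| < 3*u) (h3 : |x3| < 3*u) :
    x0^2 + a*x1^2 + b*x2^2 + a*b*x3^2 < 1/4 + 3*u + 9*d*u^2 := by
  subst hd
  have e0 := abs_lt.mp h0
  have e1 := abs_lt.mp h1
  have e2 := abs_lt.mp h2
  have e3 := abs_lt.mp h3
  have s0 : x0^2 < (1/2+3*u)^2 := sq_lt_sq' e0.1 e0.2
  have s1 : a*x1^2 < a*(3*u)^2 := mul_lt_mul_of_pos_left (sq_lt_sq' e1.1 e1.2) ha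
  have s2 : b*x2^2 < b*(3*u)^2 := mul_lt_mul_of_pos_left (sq_lt_sq' e2.1 e2.2) hb
  have s3 : a*b*x3^2 < a*b*(3*u)^2 := mul_lt_mul_of_pos_left (sq_lt_sq' e3.1 e3.2) (mul_pos ha hb)
  nlinarith [s0, s1, s2, s3]

theorem stmt_12 (a b : ℚ) (ha : 0 < a) (hb : 0 < b)
    (v₁ v₂ v₃ : ℍ[ℚ, -a, -b])
    (M : ℚ)
    (hM : M =
      max (max (max (max |v₁.re| |v₁.imI|) (max |v₁.imJ| |v₁.imK|))
               (max (max |v₂.re| |v₂.imI|) (max |v₂.imJ| |v₂.imK|)))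
          (max (max |v₃.re| |v₃.imI|) (max |v₃.imJ| |v₃.imK|)))
    (d : ℚ) (hd : d = (1 + a) * (1 + b))
    (Q : ℕ) (hQ : Q = ⌈2 * (M : ℝ) * (1 + Real.sqrt (1 + 3 * (d : ℝ)))⌉₊)
    (p : ℚ) (hp : 0 < p)
    (d₀ d₁ d₂ d₃ : ℤ)
    (h₀ : |(d₀ : ℚ)| ≤ p / 2)
    (h₁ : |(d₁ : ℚ)| < p / Q) (h₂ : |(d₂ : ℚ)| < p / Q) (h₃ : |(d₃ : ℚ)| < p / Q)
    (δ : ℍ[ℚ, -a, -b])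
    (hδ : δ = (d₀ : ℍ[ℚ, -a, -b]) + d₁ • v₁ + d₂ • v₂ + d₃ • v₃) :
    qN a b (p⁻¹ • δ) < 1 := by
  -- bounds on components of vᵢ by M
  obtain ⟨hb1, hb2, hb3⟩ := max12 _ _ _ _ _ _ _ _ _ _ _ _ M hM
  have hM0 : 0 ≤ M := le_trans (abs_nonneg _) hb1.1
  have hQpos : 0 < Q := by
    rcases Nat.eq_zero_or_pos Q with h | h
    · exfalso
      rw [h, Nat.cast_zero, div_zero] at h₁
      exact (abs_nonneg _).not_gt h₁
    · exact h
  -- M is positive, else Q = 0 and h₁ is absurd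
  have hMpos : 0 < M := by
    rcases hM0.lt_or_eq with h | h
    · exact h
    · exfalso
      have hQ0 : Q = 0 := by
        rw [hQ, ← h]
        norm_num
      exact hQpos.ne' hQ0
  have hQq : (0:ℚ) < (Q:ℚ) := by exact_mod_cast hQpos
  -- components of δ
  have hre : (p⁻¹ • δ).re = p⁻¹ * ((d₀:ℚ) + (d₁:ℚ)*v₁.re + (d₂:ℚ)*v₂.re + (d₃:ℚ)*v₃.re) := by
    subst hδ; simp; ring
  have himI : (p⁻¹ • δ).imI = p⁻¹ * ((0:ℚ) + (d₁:ℚ)*v₁.imI + (d₂:ℚ)*v₂.imI + (d₃:ℚ)*v₃.imI) := by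
    subst hδ; simp; ring
  have himJ : (p⁻¹ • δ).imJ = p⁻¹ * ((0:ℚ) + (d₁:ℚ)*v₁.imJ + (d₂:ℚ)*v₂.imJ + (d₃:ℚ)*v₃.imJ) := by
    subst hδ; simp; ring
  have himK : (p⁻¹ • δ).imK = p⁻¹ * ((0:ℚ) + (d₁:ℚ)*v₁.imK + (d₂:ℚ)*v₂.imK + (d₃:ℚ)*v₃.imK) := by
    subst hδ; simp; ring
  set u : ℚ := M / Q with hu
  have hup : p⁻¹ * (p/2 + 3*(p/Q)*M) = 1/2 + 3*u := by
    rw [hu]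
    field_simp
  have hup0 : p⁻¹ * (0 + 3*(p/Q)*M) = 3*u := by
    rw [hu]
    field_simp
    ring
  have c0 : |(p⁻¹ • δ).re| < 1/2 + 3*u := by
    rw [hre, ← hup]
    exact aux_comp p Q M (p/2) _ _ _ _ _ _ _ hp hMpos h₀ h₁ h₂ h₃ hb1.1 hb2.1 hb3.1
  have c1 : |(p⁻¹ • δ).imI| < 3*u := by
    rw [himI, ← hup0]
    exact aux_comp p Q M 0 _ _ _ _ _ _ _ hp hMpos (by simp) h₁ h₂ h₃ hb1.2.1 hb2.2.1 hb3.2.1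
  have c2 : |(p⁻¹ • δ).imJ| < 3*u := by
    rw [himJ, ← hup0]
    exact aux_comp p Q M 0 _ _ _ _ _ _ _ hp hMpos (by simp) h₁ h₂ h₃ hb1.2.2.1 hb2.2.2.1 hb3.2.2.1
  have c3 : |(p⁻¹ • δ).imK| < 3*u := by
    rw [himK, ← hup0]
    exact aux_comp p Q M 0 _ _ _ _ _ _ _ hp hMpos (by simp) h₁ h₂ h₃ hb1.2.2.2 hb2.2.2.2 hb3.2.2.2
  have hqN : qN a b (p⁻¹ • δ) = (p⁻¹ • δ).re^2 + a*(p⁻¹ • δ).imI^2 + b*(p⁻¹ • δ).imJ^2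
      + a*b*(p⁻¹ • δ).imK^2 := by
    simp [qN, QuaternionAlgebra.re_mul]; ring
  have step1 : qN a b (p⁻¹ • δ) < 1/4 + 3*u + 9*d*u^2 := by
    rw [hqN]
    exact aux_quad a b d _ _ _ _ u ha hb hd c0 c1 c2 c3
  have step2 : (1:ℚ)/4 + 3*u + 9*d*u^2 ≤ 1 := by
    have hd0 : (0:ℝ) ≤ (d:ℝ) := by
      have haR : (0:ℝ) < (a:ℝ) := by exact_mod_cast ha
      have hbR : (0:ℝ) < (b:ℝ) := by exact_mod_cast hb
      rw [hd]; push_cast; nlinarith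
    have hQle : 2*(M:ℝ)*(1 + Real.sqrt (1 + 3*(d:ℝ))) ≤ (Q:ℝ) := by
      rw [hQ]; exact Nat.le_ceil _
    have := aux_real (M:ℝ) (d:ℝ) (Real.sqrt (1 + 3*(d:ℝ))) (Q:ℝ)
      (by exact_mod_cast hMpos) hd0 rfl hQle
    have hcast : ((1/4 + 3*u + 9*d*u^2 : ℚ) : ℝ) = 1/4 + 3*((M:ℝ)/(Q:ℝ)) + 9*(d:ℝ)*((M:ℝ)/(Q:ℝ))^2 := by
      rw [hu]; push_cast; ring
    have : ((1/4 + 3*u + 9*d*u^2 : ℚ) : ℝ) ≤ ((1:ℚ):ℝ) := by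
      rw [hcast]; push_cast; linarith
    exact_mod_cast this
  linarith
end

section
/- The subset H = ℤ·1 + ℤ·(1+i)/2 + ℤ·(i+k)/7 + ℤ·(7+i+7j+k)/14 of the quaternion algebra (−7,−13/ℚ) is closed under multiplication, hence is an order. -/
open Quaternion

/-- The order `ℤ·1 + ℤ·(1+i)/2 + ℤ·(i+k)/7 + ℤ·(7+i+7j+k)/14` in `(−7,−13/ℚ)`. -/
def H713 : Set ℍ[ℚ, -7, -13] :=
  {x | ∃ n₀ n₁ n₂ n₃ : ℤ, x = (n₀ : ℍ[ℚ, -7, -13])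
      + n₁ • ((2 : ℚ)⁻¹ • ((1 : ℍ[ℚ, -7, -13]) + ⟨0, 1, 0, 0⟩))
      + n₂ • ((7 : ℚ)⁻¹ • ((⟨0, 1, 0, 0⟩ : ℍ[ℚ, -7, -13]) + ⟨0, 0, 0, 1⟩))
      + n₃ • ((14 : ℚ)⁻¹ • ((7 : ℍ[ℚ, -7, -13]) + ⟨0, 1, 0, 0⟩
          + (7 : ℚ) • (⟨0, 0, 1, 0⟩ : ℍ[ℚ, -7, -13]) + ⟨0, 0, 0, 1⟩))}

private lemma comb_eq (a b c d : ℤ) :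
    (a : ℍ[ℚ, -7, -13])
      + b • ((2 : ℚ)⁻¹ • ((1 : ℍ[ℚ, -7, -13]) + ⟨0, 1, 0, 0⟩))
      + c • ((7 : ℚ)⁻¹ • ((⟨0, 1, 0, 0⟩ : ℍ[ℚ, -7, -13]) + ⟨0, 0, 0, 1⟩))
      + d • ((14 : ℚ)⁻¹ • ((7 : ℍ[ℚ, -7, -13]) + ⟨0, 1, 0, 0⟩
          + (7 : ℚ) • (⟨0, 0, 1, 0⟩ : ℍ[ℚ, -7, -13]) + ⟨0, 0, 0, 1⟩))
    = ⟨(a : ℚ) + b/2 + d/2, (b : ℚ)/2 + c/7 + d/14, (d : ℚ)/2, (c : ℚ)/7 + d/14⟩ := by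
  rw [show (7 : ℍ[ℚ, -7, -13]) = ⟨7,0,0,0⟩ from rfl]
  ext <;> simp <;> ring

theorem stmt_17 : ∀ x ∈ H713, ∀ y ∈ H713, x * y ∈ H713 := by
  rintro x ⟨a, b, c, d, rfl⟩ y ⟨p, q, r, s, rfl⟩
  refine ⟨a*p - 2*b*q - c*q - 2*c*r - d*q - 2*d*r - 4*d*s,
          a*q + b*p + b*q - 2*c*s + d*q + 2*d*r,
          a*r + b*r + 2*b*s + c*p + c*s - 2*d*q,
          a*s - b*r + c*q + d*p + d*q + d*s, ?_⟩
  rw [comb_eq, comb_eq, comb_eq]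
  ext <;>
    simp only [QuaternionAlgebra.re_mul, QuaternionAlgebra.imI_mul,
      QuaternionAlgebra.imJ_mul, QuaternionAlgebra.imK_mul] <;>
    push_cast <;> ring
end
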